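/- Let D' be an orientation of a graph G' and let D be obtained by adding a directed path v_1 → v_2 → ... → v_s (s ≥ 3) of new vertices v_2, ..., v_{s−1} between existing vertices v_1 and v_s, where v_1v_s is not necessarily an edge. If the new path together with D' creates directed cycles, each new Eulerian subdigraph of D contains the entire new path; and if there is no directed path from v_s to v_1 in D', then D has exactly the same Eulerian subdigraphs as D'. -/

import Mathlib

variable {V : Type*} [Fintype V] [DecidableEq V]

/-- Out-degree of `v` in the digraph (arc set) `D`. -/
def outDeg (D : Finset (V × V)) (v : V) : ℕ := (D.filter fun a => a.1 = v).card

/-- In-degree of `v` in the digraph (arc set) `D`. -/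
def inDeg (D : Finset (V × V)) (v : V) : ℕ := (D.filter fun a => a.2 = v).card

/-- An arc set is Eulerian if every vertex has equal in- and out-degree. -/
def IsEulerian (H : Finset (V × V)) : Prop := ∀ v, outDeg H v = inDeg H v

instance (H : Finset (V × V)) : Decidable (IsEulerian H) := by
  unfold IsEulerian; infer_instance

/-- The Eulerian subdigraphs of `D`. -/
def eulerianSubs (D : Finset (V × V)) : Finset (Finset (V × V)) :=
  D.powerset.filter IsEulerian

/-- `D` is an AT-orientation: the number of even Eulerian subdigraphs differs from
the number of odd ones. -/
def IsAT (D : Finset (V × V)) : Prop :=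
  ((eulerianSubs D).filter fun H => Even H.card).card ≠
    ((eulerianSubs D).filter fun H => Odd H.card).card

/-- `D` is an orientation of the graph `G`: every arc is an edge of `G`,
and each edge of `G` gets exactly one direction. -/
def IsOrientation (G : SimpleGraph V) (D : Finset (V × V)) : Prop :=
  (∀ a ∈ D, G.Adj a.1 a.2) ∧ ∀ u v : V, G.Adj u v → ((u, v) ∈ D ↔ (v, u) ∉ D)

/-- `D` contains a directed closed walk, equivalently a directed cycle. -/
def HasDirCycle (D : Finset (V × V)) : Prop :=
  ∃ (a : V) (l : List V), List.Chain (fun u v => (u, v) ∈ D) a (l ++ [a])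

/-- Outerplanar: the vertices can be placed at distinct positions on a circle so that
all edges are pairwise noncrossing chords. -/
def Outerplanar (G : SimpleGraph V) : Prop :=
  ∃ p : V → ℕ, Function.Injective p ∧ ∀ a b c d : V, G.Adj a b → G.Adj c d →
    ¬ (p a < p c ∧ p c < p b ∧ p b < p d)

/-- 2-connected: at least 3 vertices, connected, and deleting any vertex leaves it connected. -/
def TwoConnected (G : SimpleGraph V) : Prop :=
  3 ≤ Fintype.card V ∧ G.Connected ∧ ∀ v : V, (SimpleGraph.induce {w | w ≠ v} G).Connected

/-- `G` is a cycle: connected and 2-regular. -/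
def IsCycleGraph (G : SimpleGraph V) [DecidableRel G.Adj] : Prop :=
  G.Connected ∧ ∀ v, G.degree v = 2

/-- The arcs of a path/walk given by a list of vertices. -/
def pathArcs (l : List V) : Finset (V × V) := (l.zip l.tail).toFinset

/-- Weighted out-degree. -/
def wOutDeg (D : Finset (V × V)) (w : V × V → ℕ) (v : V) : ℕ :=
  ∑ a ∈ D.filter (fun a => a.1 = v), w a

/-- Weighted in-degree. -/
def wInDeg (D : Finset (V × V)) (w : V × V → ℕ) (v : V) : ℕ :=
  ∑ a ∈ D.filter (fun a => a.2 = v), w a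

/-- Weighted Eulerian subdigraph. -/
def IsWEulerian (H : Finset (V × V)) (w : V × V → ℕ) : Prop :=
  ∀ v, wOutDeg H w v = wInDeg H w v

set_option linter.unusedSectionVars false

section Helpers

lemma zipFstDrop : ∀ (L : List V) {a b : V}, (a,b) ∈ L.zip L.tail → a ∈ L.dropLast := by
  intro L
  induction L with
  | nil => simp
  | cons x t ih =>
    cases t with
    | nil => simp
    | cons y t' =>
      intro a b h
      simp only [List.tail_cons, List.zip_cons_cons, List.mem_cons] at h
      rcases h with h | h
      · simp [Prod.ext_iff] at h; simp [h.1]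
      · have := ih (a := a) (b := b) (by simpa using h)
        simp [List.dropLast_cons₂] at this ⊢
        tauto

lemma zipSndTail : ∀ (L : List V) {a b : V}, (a,b) ∈ L.zip L.tail → b ∈ L.tail := by
  intro L a b h
  exact (List.of_mem_zip h).2

lemma zipFun : ∀ (L : List V), L.Nodup → ∀ {a b c : V}, (a,b) ∈ L.zip L.tail → (a,c) ∈ L.zip L.tail → b = c := by
  intro L
  induction L with
  | nil => simp
  | cons x t ih =>
    cases t with
    | nil => simp
    | cons y t' =>
      intro hnd a b c h1 h2
      simp only [List.tail_cons, List.zip_cons_cons, List.mem_cons] at h1 h2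
      have hnd' : (y :: t').Nodup := (List.nodup_cons.mp hnd).2
      have hx : x ∉ y :: t' := (List.nodup_cons.mp hnd).1
      rcases h1 with h1 | h1 <;> rcases h2 with h2 | h2
      · rw [Prod.ext_iff] at h1 h2; exact h1.2.trans h2.2.symm
      · exfalso; cases Prod.ext_iff.mp h1; subst_vars
        exact hx (List.of_mem_zip (by simpa using h2)).1
      · exfalso; cases Prod.ext_iff.mp h2; subst_vars
        exact hx (List.of_mem_zip (by simpa using h1)).1
      · exact ih hnd' (by simpa using h1) (by simpa using h2)

lemma zipInj : ∀ (L : List V), L.Nodup → ∀ {a b c : V}, (a,c) ∈ L.zip L.tail → (b,c) ∈ L.zip L.tail → a = b := by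
  intro L
  induction L with
  | nil => simp
  | cons x t ih =>
    cases t with
    | nil => simp
    | cons y t' =>
      intro hnd a b c h1 h2
      simp only [List.tail_cons, List.zip_cons_cons, List.mem_cons] at h1 h2
      have hnd' : (y :: t').Nodup := (List.nodup_cons.mp hnd).2
      have hy : y ∉ t' := (List.nodup_cons.mp hnd').1
      rcases h1 with h1 | h1 <;> rcases h2 with h2 | h2
      · rw [Prod.ext_iff] at h1 h2; exact h1.1.trans h2.1.symm
      · exfalso; cases Prod.ext_iff.mp h1; subst_vars
        exact hy (List.of_mem_zip (by simpa using h2)).2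
      · exfalso; cases Prod.ext_iff.mp h2; subst_vars
        exact hy (List.of_mem_zip (by simpa using h1)).2
      · exact ih hnd' (by simpa using h1) (by simpa using h2)

lemma zipExFst : ∀ (L : List V) {v : V}, v ∈ L.dropLast → ∃ b, (v, b) ∈ L.zip L.tail := by
  intro L
  induction L with
  | nil => simp
  | cons x t ih =>
    cases t with
    | nil => simp
    | cons y t' =>
      intro v hv
      simp only [List.dropLast_cons₂, List.mem_cons] at hv
      rcases hv with rfl | hv
      · exact ⟨y, by simp⟩
      · obtain ⟨b, hb⟩ := ih hv
        exact ⟨b, by simp only [List.tail_cons, List.zip_cons_cons, List.mem_cons]; right; simpa using hb⟩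

lemma zipExSnd : ∀ (L : List V) {v : V}, v ∈ L.tail → ∃ a, (a, v) ∈ L.zip L.tail := by
  intro L
  induction L with
  | nil => simp
  | cons x t ih =>
    cases t with
    | nil => simp
    | cons y t' =>
      intro v hv
      simp only [List.tail_cons, List.mem_cons] at hv
      rcases hv with rfl | hv
      · exact ⟨x, by simp⟩
      · obtain ⟨a, ha⟩ := ih (v := v) (by simpa using hv)
        exact ⟨a, by simp only [List.tail_cons, List.zip_cons_cons, List.mem_cons]; right; simpa using ha⟩

lemma filter_sdiff_card {P H : Finset (V × V)} (hPH : P ⊆ H) (p : V × V → Prop) [DecidablePred p] :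
    ((H \ P).filter p).card = (H.filter p).card - (P.filter p).card := by
  have h : (H \ P).filter p = H.filter p \ P.filter p := by
    ext a; simp only [Finset.mem_filter, Finset.mem_sdiff]; tauto
  rw [h, Finset.card_sdiff_of_subset (Finset.filter_subset_filter p hPH)]

lemma outDeg_sdiff {P H : Finset (V × V)} (hPH : P ⊆ H) (v : V) :
    outDeg (H \ P) v = outDeg H v - outDeg P v := filter_sdiff_card hPH _

lemma inDeg_sdiff {P H : Finset (V × V)} (hPH : P ⊆ H) (v : V) :
    inDeg (H \ P) v = inDeg H v - inDeg P v := filter_sdiff_card hPH _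

lemma outDeg_pathArcs {L : List V} (hL : L.Nodup) (v : V) :
    outDeg (pathArcs L) v = if v ∈ L.dropLast then 1 else 0 := by
  unfold outDeg pathArcs
  split_ifs with h
  · obtain ⟨b, hb⟩ := zipExFst L h
    have he : ((L.zip L.tail).toFinset.filter fun a => a.1 = v) = {(v, b)} := by
      ext a
      simp only [Finset.mem_filter, List.mem_toFinset, Finset.mem_singleton]
      constructor
      · rintro ⟨ha, h1⟩
        obtain ⟨a1, a2⟩ := a
        dsimp at h1; subst h1
        exact Prod.ext rfl (zipFun L hL ha hb)
      · rintro rfl; exact ⟨hb, rfl⟩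
    rw [he, Finset.card_singleton]
  · rw [Finset.filter_eq_empty_iff.mpr, Finset.card_empty]
    rintro ⟨a1, a2⟩ ha h1
    dsimp at h1; subst h1
    exact h (zipFstDrop L (List.mem_toFinset.mp ha))

lemma inDeg_pathArcs {L : List V} (hL : L.Nodup) (v : V) :
    inDeg (pathArcs L) v = if v ∈ L.tail then 1 else 0 := by
  unfold inDeg pathArcs
  split_ifs with h
  · obtain ⟨a, ha⟩ := zipExSnd L h
    have he : ((L.zip L.tail).toFinset.filter fun x => x.2 = v) = {(a, v)} := by
      ext x
      simp only [Finset.mem_filter, List.mem_toFinset, Finset.mem_singleton]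
      constructor
      · rintro ⟨hx, h1⟩
        obtain ⟨x1, x2⟩ := x
        dsimp at h1; subst h1
        exact Prod.ext (zipInj L hL hx ha) rfl
      · rintro rfl; exact ⟨ha, rfl⟩
    rw [he, Finset.card_singleton]
  · rw [Finset.filter_eq_empty_iff.mpr, Finset.card_empty]
    rintro ⟨a1, a2⟩ ha h1
    dsimp at h1; subst h1
    exact h (zipSndTail L (List.mem_toFinset.mp ha))

lemma exOut {H : Finset (V × V)} (hE : IsEulerian H) {x a : V} (h : (a, x) ∈ H) :
    ∃ b, (x, b) ∈ H := by
  have hin : 0 < inDeg H x :=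
    Finset.card_pos.mpr ⟨(a, x), Finset.mem_filter.mpr ⟨h, rfl⟩⟩
  have hout : 0 < outDeg H x := (hE x) ▸ hin
  obtain ⟨p, hp⟩ := Finset.card_pos.mp hout
  rw [Finset.mem_filter] at hp
  obtain ⟨p1, p2⟩ := p
  obtain ⟨hp1, hp2⟩ := hp
  dsimp at hp2; subst hp2
  exact ⟨p2, hp1⟩

lemma exIn {H : Finset (V × V)} (hE : IsEulerian H) {x b : V} (h : (x, b) ∈ H) :
    ∃ a, (a, x) ∈ H := by
  have hout : 0 < outDeg H x :=
    Finset.card_pos.mpr ⟨(x, b), Finset.mem_filter.mpr ⟨h, rfl⟩⟩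
  have hin : 0 < inDeg H x := (hE x) ▸ hout
  obtain ⟨p, hp⟩ := Finset.card_pos.mp hin
  rw [Finset.mem_filter] at hp
  obtain ⟨p1, p2⟩ := p
  obtain ⟨hp1, hp2⟩ := hp
  dsimp at hp2; subst hp2
  exact ⟨p1, hp1⟩

lemma chain_of_rtg {r : V → V → Prop} {a b : V} (h : Relation.ReflTransGen r a b) :
    a = b ∨ ∃ m, List.Chain r a (m ++ [b]) := by
  induction h with
  | refl => exact Or.inl rfl
  | @tail c d h1 h2 ih =>
    rcases ih with rfl | ⟨m, hm⟩
    · exact Or.inr ⟨[], List.Chain.cons h2 List.Chain.nil⟩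
    · refine Or.inr ⟨m ++ [c], ?_⟩
      rw [List.append_assoc]
      exact List.isChain_cons_split.mpr ⟨hm, List.Chain.cons h2 List.Chain.nil⟩

lemma sum_outDeg (K : Finset (V × V)) (S : Finset V) :
    ∑ v ∈ S, outDeg K v = (K.filter fun a => a.1 ∈ S).card := by
  rw [Finset.card_eq_sum_card_fiberwise (f := fun a : V × V => a.1) (t := S)
    (s := K.filter fun a => a.1 ∈ S) (fun a ha => (Finset.mem_filter.mp (Finset.mem_coe.mp ha)).2)]
  apply Finset.sum_congr rfl
  intro v hv
  unfold outDeg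
  congr 1
  ext a
  simp only [Finset.mem_filter]
  constructor
  · rintro ⟨ha, h1⟩; exact ⟨⟨ha, h1 ▸ hv⟩, h1⟩
  · rintro ⟨⟨ha, _⟩, h1⟩; exact ⟨ha, h1⟩

lemma sum_inDeg (K : Finset (V × V)) (S : Finset V) :
    ∑ v ∈ S, inDeg K v = (K.filter fun a => a.2 ∈ S).card := by
  rw [Finset.card_eq_sum_card_fiberwise (f := fun a : V × V => a.2) (t := S)
    (s := K.filter fun a => a.2 ∈ S) (fun a ha => (Finset.mem_filter.mp (Finset.mem_coe.mp ha)).2)]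
  apply Finset.sum_congr rfl
  intro v hv
  unfold inDeg
  congr 1
  ext a
  simp only [Finset.mem_filter]
  constructor
  · rintro ⟨ha, h1⟩; exact ⟨⟨ha, h1 ▸ hv⟩, h1⟩
  · rintro ⟨⟨ha, _⟩, h1⟩; exact ⟨ha, h1⟩

lemma pa_cons (u x : V) (r : List V) :
    pathArcs (u :: x :: r) = insert (u, x) (pathArcs (x :: r)) := by
  show ((u :: x :: r).zip (x :: r)).toFinset = _
  rw [List.zip_cons_cons, List.toFinset_cons]
  rfl

lemma pa_single (u w : V) : pathArcs [u, w] = {(u, w)} := by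
  simp [pathArcs]

end Helpers

theorem stmt16 (D' : Finset (V × V)) (v1 vs : V) (hne : v1 ≠ vs)
    (l : List V) (hl : l ≠ []) (hnodup : l.Nodup) (hv1 : v1 ∉ l) (hvs : vs ∉ l)
    (hfresh : ∀ x ∈ l, ∀ a ∈ D', a.1 ≠ x ∧ a.2 ≠ x)
    (D : Finset (V × V)) (hD : D = D' ∪ pathArcs (v1 :: (l ++ [vs]))) :
    (∀ H ∈ eulerianSubs D, (∃ e ∈ H, e ∉ D') → pathArcs (v1 :: (l ++ [vs])) ⊆ H) ∧
    ((¬ ∃ m : List V, List.Chain (fun x y => (x, y) ∈ D') vs (m ++ [v1])) →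
      eulerianSubs D = eulerianSubs D') := by
  classical
  set L : List V := v1 :: (l ++ [vs]) with hLdef
  set P : Finset (V × V) := pathArcs L with hPdef
  have hLnd : L.Nodup := by
    rw [hLdef, List.nodup_cons]
    constructor
    · simp [hv1, hne]
    · rw [List.nodup_append]
      exact ⟨hnodup, List.nodup_singleton vs, by simp only [List.mem_singleton]; rintro a ha b rfl rfl; exact hvs ha⟩
  have hsubP : P ⊆ D := by rw [hD]; exact Finset.subset_union_right
  have hDP : ∀ a ∈ D, ∀ x ∈ l, (a.1 = x ∨ a.2 = x) → a ∈ P := by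
    intro a ha x hx hax
    rw [hD, Finset.mem_union] at ha
    rcases ha with ha | ha
    · rcases hax with h | h
      · exact absurd h (hfresh x hx a ha).1
      · exact absurd h (hfresh x hx a ha).2
    · exact ha
  have memPzip : ∀ {a b : V}, (a, b) ∈ P ↔ (a, b) ∈ L.zip L.tail := by
    intro a b
    rw [hPdef]
    exact List.mem_toFinset
  have uniqOut : ∀ x ∈ l, ∀ b c : V, (x, b) ∈ D → (x, c) ∈ D → b = c := by
    intro x hx b c hb hc
    have hbp := memPzip.mp (hDP (x, b) hb x hx (Or.inl rfl))
    have hcp := memPzip.mp (hDP (x, c) hc x hx (Or.inl rfl))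
    exact zipFun L hLnd hbp hcp
  have uniqIn : ∀ x ∈ l, ∀ a c : V, (a, x) ∈ D → (c, x) ∈ D → a = c := by
    intro x hx a c ha hc
    have hap := memPzip.mp (hDP (a, x) ha x hx (Or.inr rfl))
    have hcp := memPzip.mp (hDP (c, x) hc x hx (Or.inr rfl))
    exact zipInj L hLnd hap hcp
  -- forward propagation
  have FWD : ∀ (H : Finset (V × V)), H ⊆ D → IsEulerian H →
      ∀ (m : List V), (∀ x ∈ m, x ∈ l) → ∀ u, pathArcs (u :: m ++ [vs]) ⊆ D →
      (u, (m ++ [vs]).headD vs) ∈ H → pathArcs (u :: m ++ [vs]) ⊆ H := by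
    intro H hHD hE m
    induction m with
    | nil =>
      intro _ u hsub hu
      intro a ha
      have h2 : pathArcs ((u :: []) ++ [vs]) = {(u, vs)} := pa_single u vs
      rw [h2, Finset.mem_singleton] at ha
      subst ha
      simpa using hu
    | cons x m' ih =>
      intro hm u hsub hu
      have hu' : (u, x) ∈ H := by simpa using hu
      have hx : x ∈ l := hm x (by simp)
      have hpa : pathArcs ((u :: x :: m') ++ [vs]) =
          insert (u, x) (pathArcs ((x :: m') ++ [vs])) := by
        simp only [List.cons_append]
        exact pa_cons u x (m' ++ [vs])
      have hmemD1 : (x, (m' ++ [vs]).headD vs) ∈ pathArcs ((x :: m') ++ [vs]) := by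
        cases m' with
        | nil =>
          have h2 : pathArcs ((x :: []) ++ [vs]) = {(x, vs)} := pa_single x vs
          rw [h2]; simp
        | cons y r =>
          have h2 : pathArcs ((x :: y :: r) ++ [vs]) =
              insert (x, y) (pathArcs ((y :: r) ++ [vs])) := by
            simp only [List.cons_append]
            exact pa_cons x y (r ++ [vs])
          rw [h2]; simp
      have hsub' : pathArcs ((x :: m') ++ [vs]) ⊆ D := by
        intro a ha
        apply hsub
        rw [hpa]
        exact Finset.mem_insert_of_mem ha
      have hD1 : (x, (m' ++ [vs]).headD vs) ∈ D := hsub' hmemD1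
      obtain ⟨c, hc⟩ := exOut hE hu'
      have hcb : c = (m' ++ [vs]).headD vs := uniqOut x hx c _ (hHD hc) hD1
      have hH1 : (x, (m' ++ [vs]).headD vs) ∈ H := hcb ▸ hc
      have hrest := ih (fun z hz => hm z (by simp [hz])) x hsub' hH1
      rw [hpa]
      exact Finset.insert_subset hu' hrest
  -- backward propagation
  have BACK : ∀ (H : Finset (V × V)), H ⊆ D → IsEulerian H →
      ∀ (m : List V), (∀ x ∈ m, x ∈ l) → ∀ u, pathArcs (u :: m ++ [vs]) ⊆ D →
      (∃ e ∈ pathArcs (u :: m ++ [vs]), e ∈ H) → (u, (m ++ [vs]).headD vs) ∈ H := by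
    intro H hHD hE m
    induction m with
    | nil =>
      rintro _ u hsub ⟨e, heP, heH⟩
      have h2 : pathArcs ((u :: []) ++ [vs]) = {(u, vs)} := pa_single u vs
      rw [h2, Finset.mem_singleton] at heP
      subst heP
      simpa using heH
    | cons x m' ih =>
      rintro hm u hsub ⟨e, heP, heH⟩
      have hx : x ∈ l := hm x (by simp)
      have hpa : pathArcs ((u :: x :: m') ++ [vs]) =
          insert (u, x) (pathArcs ((x :: m') ++ [vs])) := by
        simp only [List.cons_append]
        exact pa_cons u x (m' ++ [vs])
      have hsub' : pathArcs ((x :: m') ++ [vs]) ⊆ D := by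
        intro a ha
        apply hsub
        rw [hpa]
        exact Finset.mem_insert_of_mem ha
      rw [hpa, Finset.mem_insert] at heP
      show (u, x) ∈ H
      rcases heP with rfl | heP
      · exact heH
      · have hH1 : (x, (m' ++ [vs]).headD vs) ∈ H :=
          ih (fun z hz => hm z (by simp [hz])) x hsub' ⟨e, heP, heH⟩
        obtain ⟨c, hc⟩ := exIn hE hH1
        have huD : (u, x) ∈ D := by
          apply hsub
          rw [hpa]
          exact Finset.mem_insert_self _ _
        have hcu : c = u := uniqIn x hx c u (hHD hc) huD
        exact hcu ▸ hc
  have part1 : ∀ H ∈ eulerianSubs D, (∃ e ∈ H, e ∉ D') → P ⊆ H := by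
    rintro H hH ⟨e, heH, heD'⟩
    rw [eulerianSubs, Finset.mem_filter, Finset.mem_powerset] at hH
    obtain ⟨hHD, hE⟩ := hH
    have heP : e ∈ P := by
      have he := hHD heH
      rw [hD, Finset.mem_union] at he
      tauto
    have h1 : (v1, (l ++ [vs]).headD vs) ∈ H :=
      BACK H hHD hE l (fun x hx => hx) v1 hsubP ⟨e, heP, heH⟩
    exact FWD H hHD hE l (fun x hx => hx) v1 hsubP h1
  refine ⟨part1, ?_⟩
  intro hnopath
  ext H
  simp only [eulerianSubs, Finset.mem_filter, Finset.mem_powerset]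
  constructor
  · rintro ⟨hHD, hE⟩
    refine ⟨?_, hE⟩
    by_contra hnsub
    obtain ⟨e, heH, heD'⟩ := Finset.not_subset.mp hnsub
    have hPH : P ⊆ H := part1 H
      (Finset.mem_filter.mpr ⟨Finset.mem_powerset.mpr hHD, hE⟩) ⟨e, heH, heD'⟩
    set K : Finset (V × V) := H \ P with hKdef
    have hKD' : ∀ {x y : V}, (x, y) ∈ K → (x, y) ∈ D' := by
      intro x y hxy
      rw [hKdef, Finset.mem_sdiff] at hxy
      have := hHD hxy.1
      rw [hD, Finset.mem_union] at this
      tauto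
    have hdrop : L.dropLast = v1 :: l := by
      rw [hLdef, show v1 :: (l ++ [vs]) = (v1 :: l) ++ [vs] by simp, List.dropLast_concat]
    have htail : L.tail = l ++ [vs] := rfl
    have outP : ∀ v, outDeg P v = if v ∈ v1 :: l then 1 else 0 := by
      intro v; rw [hPdef, outDeg_pathArcs hLnd, hdrop]
    have inP : ∀ v, inDeg P v = if v ∈ l ++ [vs] then 1 else 0 := by
      intro v; rw [hPdef, inDeg_pathArcs hLnd, htail]
    have hK1 : ∀ v, v ≠ v1 → v ≠ vs → outDeg K v = inDeg K v := by
      intro v h1 h2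
      rw [hKdef, outDeg_sdiff hPH, inDeg_sdiff hPH, hE v, outP, inP]
      simp [h1, h2]
    have hinHvs : 1 ≤ inDeg H vs := by
      obtain ⟨a, ha⟩ := zipExSnd L (v := vs) (by rw [htail]; simp)
      exact Finset.card_pos.mpr
        ⟨(a, vs), Finset.mem_filter.mpr ⟨hPH (memPzip.mpr ha), rfl⟩⟩
    have houtHv1 : 1 ≤ outDeg H v1 := by
      obtain ⟨b, hb⟩ := zipExFst L (v := v1) (by rw [hdrop]; simp)
      exact Finset.card_pos.mpr
        ⟨(v1, b), Finset.mem_filter.mpr ⟨hPH (memPzip.mpr hb), rfl⟩⟩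
    have hKvs : outDeg K vs = inDeg K vs + 1 := by
      have h1 := hE vs
      have m1 : vs ∉ v1 :: l := by simp [Ne.symm hne, hvs]
      have m2 : vs ∈ l ++ [vs] := by simp
      rw [hKdef, outDeg_sdiff hPH, inDeg_sdiff hPH, outP, inP, if_neg m1, if_pos m2]
      omega
    have hKv1 : inDeg K v1 = outDeg K v1 + 1 := by
      have h1 := hE v1
      have m1 : v1 ∈ v1 :: l := by simp
      have m2 : v1 ∉ l ++ [vs] := by simp [hne, hv1]
      rw [hKdef, outDeg_sdiff hPH, inDeg_sdiff hPH, outP, inP, if_pos m1, if_neg m2]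
      omega
    set r : V → V → Prop := fun x y => (x, y) ∈ K with hr
    set S : Finset V := Finset.univ.filter (fun v => Relation.ReflTransGen r vs v) with hSdef
    have hvsS : vs ∈ S := by
      rw [hSdef, Finset.mem_filter]
      exact ⟨Finset.mem_univ _, Relation.ReflTransGen.refl⟩
    have hclosed : ∀ a ∈ K, a.1 ∈ S → a.2 ∈ S := by
      rintro ⟨a1, a2⟩ ha h1
      rw [hSdef, Finset.mem_filter] at h1 ⊢
      exact ⟨Finset.mem_univ _, h1.2.tail ha⟩
    have hv1S : v1 ∉ S := by
      intro h
      rw [hSdef, Finset.mem_filter] at h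
      rcases chain_of_rtg h.2 with heq | ⟨m, hm⟩
      · exact hne heq.symm
      · exact hnopath ⟨m, List.IsChain.imp (fun x y hxy => hKD' hxy) hm⟩
    have hA := sum_outDeg K S
    have hB := sum_inDeg K S
    have hAB : (K.filter fun a => a.1 ∈ S) ⊆ (K.filter fun a => a.2 ∈ S) := by
      intro a ha
      rw [Finset.mem_filter] at ha ⊢
      exact ⟨ha.1, hclosed a ha.1 ha.2⟩
    have hle : ∑ v ∈ S, outDeg K v ≤ ∑ v ∈ S, inDeg K v := by
      rw [hA, hB]; exact Finset.card_le_card hAB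
    have heq : ∑ v ∈ S.erase vs, outDeg K v = ∑ v ∈ S.erase vs, inDeg K v := by
      apply Finset.sum_congr rfl
      intro v hv
      have hvne : v ≠ vs := Finset.ne_of_mem_erase hv
      have hvne1 : v ≠ v1 := by
        rintro rfl
        exact hv1S (Finset.mem_of_mem_erase hv)
      exact hK1 v hvne1 hvne
    have hgt : ∑ v ∈ S, outDeg K v = (∑ v ∈ S, inDeg K v) + 1 := by
      rw [← Finset.add_sum_erase S _ hvsS, ← Finset.add_sum_erase S _ hvsS, hKvs, heq]
      omega
    omega
  · rintro ⟨hHD', hE⟩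
    refine ⟨hHD'.trans ?_, hE⟩
    rw [hD]
    exact Finset.subset_union_left
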